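/- Let A be a Banach algebra, U a Banach A-bimodule, and let D : T(A,U) → T(A,U) be a linear map of the form D((a,u)) = (δ₁(a)+τ₁(u), δ₂(a)+τ₂(u)), where δ₁ : A → A, δ₂ : A → U, τ₁ : U → A and τ₂ : U → U are linear maps. If D is a derivation, then: δ₁ : A → A and δ₂ : A → U are derivations; τ₂ satisfies τ₂(a·u) = a·τ₂(u) + δ₂(a)·u and τ₂(u·a) = τ₂(u)·a + u·δ₂(a) for all a ∈ A, u ∈ U; and τ₁ satisfies τ₁(a·u) = a·τ₁(u), τ₁(u·a) = τ₁(u)·a and u·τ₁(v) + τ₁(u)·v = 0 for all a ∈ A, u, v ∈ U. -/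

import Mathlib

/-!
`A` is a (possibly non-unital) Banach algebra over `ℂ`, and `U` is a Banach `A`-bimodule whose
left and right actions are given by the continuous bilinear maps `l` and `r`.
The module extension (trivial extension) Banach algebra `T(A,U)` is `A × U` (with the ℓ¹-norm,
whose topology is the product topology) and multiplication `trivMul l r`.

Note: in the identity for `τ₂` the paper writes `δ₂(a)·u`, which is ill-typed in the bimodule
setting (`δ₂ a ∈ U`); the mathematically forced reading is `δ₁(a)·u`, which is used here.
-/

/-- Multiplication of the module extension (trivial extension) algebra `T(A,U) = A × U`:
`(a,u)(b,v) = (ab, a·v + u·b)`. -/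
noncomputable def trivMul {A U : Type*} [NonUnitalNormedRing A] [NormedSpace ℂ A]
    [NormedAddCommGroup U] [NormedSpace ℂ U]
    (l : A →L[ℂ] U →L[ℂ] U) (r : U →L[ℂ] A →L[ℂ] U) (x y : A × U) : A × U :=
  (x.1 * y.1, l x.1 y.2 + r x.2 y.1)

theorem stmt0
    {A U : Type*}
    [NonUnitalNormedRing A] [NormedSpace ℂ A] [IsScalarTower ℂ A A] [SMulCommClass ℂ A A]
    [CompleteSpace A]
    [NormedAddCommGroup U] [NormedSpace ℂ U] [CompleteSpace U]
    -- `U` is a Banach `A`-bimodule: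
    (l : A →L[ℂ] U →L[ℂ] U) (r : U →L[ℂ] A →L[ℂ] U)
    (hl : ∀ (a b : A) (u : U), l (a * b) u = l a (l b u))
    (hr : ∀ (u : U) (a b : A), r u (a * b) = r (r u a) b)
    (hlr : ∀ (a : A) (u : U) (b : A), r (l a u) b = l a (r u b))
    -- the components of `D`:
    (δ₁ : A →ₗ[ℂ] A) (δ₂ : A →ₗ[ℂ] U) (τ₁ : U →ₗ[ℂ] A) (τ₂ : U →ₗ[ℂ] U)
    (D : (A × U) →ₗ[ℂ] (A × U))
    (hD : ∀ (a : A) (u : U), D (a, u) = (δ₁ a + τ₁ u, δ₂ a + τ₂ u))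
    -- `D` is a derivation on `T(A,U)`:
    (hder : ∀ x y : A × U, D (trivMul l r x y) = trivMul l r x (D y) + trivMul l r (D x) y) :
    -- `δ₁ : A → A` is a derivation
    (∀ a b : A, δ₁ (a * b) = a * δ₁ b + δ₁ a * b) ∧
    -- `δ₂ : A → U` is a derivation
    (∀ a b : A, δ₂ (a * b) = l a (δ₂ b) + r (δ₂ a) b) ∧
    -- `τ₂(a·u) = a·τ₂(u) + δ₁(a)·u`
    (∀ (a : A) (u : U), τ₂ (l a u) = l a (τ₂ u) + l (δ₁ a) u) ∧
    -- `τ₂(u·a) = τ₂(u)·a + u·δ₁(a)`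
    (∀ (a : A) (u : U), τ₂ (r u a) = r (τ₂ u) a + r u (δ₁ a)) ∧
    -- `τ₁` is an `A`-bimodule homomorphism
    (∀ (a : A) (u : U), τ₁ (l a u) = a * τ₁ u) ∧
    (∀ (a : A) (u : U), τ₁ (r u a) = τ₁ u * a) ∧
    -- `u·τ₁(v) + τ₁(u)·v = 0`
    (∀ u v : U, r u (τ₁ v) + l (τ₁ u) v = 0) := by
  have key : ∀ (a b : A) (u v : U),
      D (trivMul l r (a, u) (b, v)) = trivMul l r (a, u) (D (b, v)) + trivMul l r (D (a, u)) (b, v) :=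
    fun a b u v => hder (a, u) (b, v)
  refine ⟨?_, ?_, ?_, ?_, ?_, ?_, ?_⟩
  · intro a b
    have h := key a b 0 0
    simp [trivMul, hD, Prod.ext_iff] at h
    exact h.1
  · intro a b
    have h := key a b 0 0
    simp [trivMul, hD, Prod.ext_iff] at h
    exact h.2
  · intro a u
    have h := key a 0 0 u
    simp [trivMul, hD, Prod.ext_iff] at h
    exact h.2
  · intro a u
    have h := key 0 a u 0
    simp [trivMul, hD, Prod.ext_iff] at h
    rw [h.2, add_comm]
  · intro a u
    have h := key a 0 0 u
    simp [trivMul, hD, Prod.ext_iff] at h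
    exact h.1
  · intro a u
    have h := key 0 a u 0
    simp [trivMul, hD, Prod.ext_iff] at h
    exact h.1
  · intro u v
    have h := key 0 0 u v
    simp [trivMul, hD, Prod.ext_iff] at h
    exact h.symm
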